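/- Let p be a prime. Let A → A' be a formally étale ring homomorphism which is also a map of δ-rings, and let A' → B be a ring homomorphism into a δ-ring B in which p is nilpotent. If the composite A → B is a map of δ-rings, then A' → B is also a map of δ-rings. -/

import Mathlib

universe u

/-- A δ-ring structure on a commutative ring `A`, for the prime `p`. -/
structure DeltaStruct (p : ℕ) (A : Type*) [CommRing A] where
  δ : A → A
  delta_one : δ 1 = 0
  delta_add : ∀ x y : A,
    δ (x + y) = δ x + δ y - ∑ i ∈ Finset.Ioo 0 p, ((p.choose i / p : ℕ) : A) * x ^ i * y ^ (p - i)
  delta_mul : ∀ x y : A,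
    δ (x * y) = x ^ p * δ y + y ^ p * δ x + (p : A) * δ x * δ y

section Waux

variable (p : ℕ) {B : Type*} [CommRing B]

/-- The universal "error" polynomial for δ-rings. -/
def wF (x y : B) : B := ∑ i ∈ Finset.Ioo 0 p, ((p.choose i / p : ℕ) : B) * x ^ i * y ^ (p - i)

lemma wF_zero_right (x : B) : wF p x 0 = 0 := by
  unfold wF
  refine Finset.sum_eq_zero fun i hi => ?_
  rw [Finset.mem_Ioo] at hi
  rw [zero_pow (Nat.sub_ne_zero_of_lt hi.2), mul_zero]

lemma wF_zero_left (x : B) : wF p 0 x = 0 := by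
  unfold wF
  refine Finset.sum_eq_zero fun i hi => ?_
  rw [Finset.mem_Ioo] at hi
  rw [zero_pow hi.1.ne', mul_zero, zero_mul]

lemma wF_comm (hp : p.Prime) (x y : B) : wF p x y = wF p y x := by
  unfold wF
  apply Finset.sum_nbij' (fun i => p - i) (fun i => p - i)
  · intro i hi
    simp only [Finset.mem_Ioo] at hi ⊢
    omega
  · intro i hi
    simp only [Finset.mem_Ioo] at hi ⊢
    omega
  · intro i hi
    simp only [Finset.mem_Ioo] at hi
    omega
  · intro i hi
    simp only [Finset.mem_Ioo] at hi
    omega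
  · intro i hi
    simp only [Finset.mem_Ioo] at hi
    rw [Nat.choose_symm hi.2.le, Nat.sub_sub_self hi.2.le]
    ring

lemma map_wF {C : Type*} [CommRing C] (f : B →+* C) (x y : B) :
    f (wF p x y) = wF p (f x) (f y) := by
  unfold wF
  rw [map_sum]
  refine Finset.sum_congr rfl fun i _ => ?_
  simp [map_mul, map_pow, map_natCast]

lemma p_mul_wF (hp : p.Prime) (x y : B) :
    (p : B) * wF p x y = (x + y) ^ p - x ^ p - y ^ p := by
  have h0 : (0 : ℕ) ∉ insert p (Finset.Ioo 0 p) := by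
    simp [Finset.mem_Ioo, hp.ne_zero, Ne.symm hp.ne_zero]
  have hpmem : p ∉ Finset.Ioo 0 p := by simp
  have hr : Finset.range (p + 1) = insert 0 (insert p (Finset.Ioo 0 p)) := by
    ext i
    simp only [Finset.mem_range, Finset.mem_insert, Finset.mem_Ioo]
    omega
  rw [add_pow, hr, Finset.sum_insert h0, Finset.sum_insert hpmem]
  have hterm : ∀ i ∈ Finset.Ioo 0 p,
      x ^ i * y ^ (p - i) * (p.choose i : B) = (p : B) * (((p.choose i / p : ℕ) : B) * x ^ i * y ^ (p - i)) := by
    intro i hi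
    rw [Finset.mem_Ioo] at hi
    have hdvd : p ∣ p.choose i := hp.dvd_choose_self hi.1.ne' hi.2
    have : (p * (p.choose i / p) : ℕ) = p.choose i := Nat.mul_div_cancel' hdvd
    calc x ^ i * y ^ (p - i) * (p.choose i : B)
        = ((p * (p.choose i / p) : ℕ) : B) * x ^ i * y ^ (p - i) := by rw [this]; ring
      _ = (p : B) * (((p.choose i / p : ℕ) : B) * x ^ i * y ^ (p - i)) := by push_cast; ring
  rw [Finset.sum_congr rfl hterm, ← Finset.mul_sum]
  unfold wF
  simp [Nat.choose_self, Nat.sub_self]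
  ring

lemma wF_cocycle (hp : p.Prime) (x y z : B) :
    wF p x y + wF p (x + y) z = wF p y z + wF p x (y + z) := by
  -- prove the universal identity over ℤ and specialize
  let R := MvPolynomial (Fin 3) ℤ
  let X : Fin 3 → R := fun i => MvPolynomial.X i
  have key : wF p (X 0) (X 1) + wF p (X 0 + X 1) (X 2)
      = wF p (X 1) (X 2) + wF p (X 0) (X 1 + X 2) := by
    have hpne : (p : R) ≠ 0 := Nat.cast_ne_zero.mpr hp.ne_zero
    apply mul_left_cancel₀ hpne
    rw [mul_add, mul_add, p_mul_wF p hp, p_mul_wF p hp, p_mul_wF p hp, p_mul_wF p hp]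
    ring
  let φ : R →+* B := (MvPolynomial.aeval (R := ℤ) (fun i : Fin 3 => ![x, y, z] i)).toRingHom
  have e0 : φ (X 0) = x := by show (MvPolynomial.aeval _) (MvPolynomial.X _) = x; rw [MvPolynomial.aeval_X]; rfl
  have e1 : φ (X 1) = y := by show (MvPolynomial.aeval _) (MvPolynomial.X _) = y; rw [MvPolynomial.aeval_X]; rfl
  have e2 : φ (X 2) = z := by show (MvPolynomial.aeval _) (MvPolynomial.X _) = z; rw [MvPolynomial.aeval_X]; rfl
  have h2 := congrArg φ key
  rw [map_add, map_add, map_wF p φ, map_wF p φ, map_wF p φ, map_wF p φ, map_add, map_add,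
    e0, e1, e2] at h2
  exact h2

lemma wF_mul_left (x y z : B) : wF p (x * y) (x * z) = x ^ p * wF p y z := by
  unfold wF
  rw [Finset.mul_sum]
  refine Finset.sum_congr rfl fun i hi => ?_
  rw [Finset.mem_Ioo] at hi
  rw [mul_pow, mul_pow]
  have : x ^ i * x ^ (p - i) = x ^ p := by
    rw [← pow_add, Nat.add_sub_cancel' hi.2.le]
  calc ((p.choose i / p : ℕ) : B) * (x ^ i * y ^ i) * (x ^ (p - i) * z ^ (p - i))
      = (x ^ i * x ^ (p - i)) * (((p.choose i / p : ℕ) : B) * y ^ i * z ^ (p - i)) := by ring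
    _ = x ^ p * (((p.choose i / p : ℕ) : B) * y ^ i * z ^ (p - i)) := by rw [this]

end Waux

/-- Length-2 Witt vectors (as a bare pair). -/
@[ext]
structure W2 (p : ℕ) (B : Type u) where
  fst : B
  snd : B

namespace W2

variable {p : ℕ} {B : Type u} [CommRing B]

instance : Add (W2 p B) := ⟨fun a b => ⟨a.fst + b.fst, a.snd + b.snd - wF p a.fst b.fst⟩⟩
instance : Mul (W2 p B) :=
  ⟨fun a b => ⟨a.fst * b.fst, a.fst ^ p * b.snd + b.fst ^ p * a.snd + (p : B) * a.snd * b.snd⟩⟩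
instance : Neg (W2 p B) := ⟨fun a => ⟨-a.fst, -a.snd + wF p a.fst (-a.fst)⟩⟩
instance : Zero (W2 p B) := ⟨⟨0, 0⟩⟩
instance : One (W2 p B) := ⟨⟨1, 0⟩⟩

@[simp] lemma add_fst (a b : W2 p B) : (a + b).fst = a.fst + b.fst := rfl
@[simp] lemma add_snd (a b : W2 p B) : (a + b).snd = a.snd + b.snd - wF p a.fst b.fst := rfl
@[simp] lemma mul_fst (a b : W2 p B) : (a * b).fst = a.fst * b.fst := rfl
@[simp] lemma mul_snd (a b : W2 p B) :
    (a * b).snd = a.fst ^ p * b.snd + b.fst ^ p * a.snd + (p : B) * a.snd * b.snd := rfl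
@[simp] lemma neg_fst (a : W2 p B) : (-a).fst = -a.fst := rfl
@[simp] lemma neg_snd (a : W2 p B) : (-a).snd = -a.snd + wF p a.fst (-a.fst) := rfl
@[simp] lemma zero_fst : (0 : W2 p B).fst = 0 := rfl
@[simp] lemma zero_snd : (0 : W2 p B).snd = 0 := rfl
@[simp] lemma one_fst : (1 : W2 p B).fst = 1 := rfl
@[simp] lemma one_snd : (1 : W2 p B).snd = 0 := rfl

variable [hfp : Fact p.Prime]

instance : CommRing (W2 p B) where
  add := (· + ·)
  zero := 0
  neg := Neg.neg
  mul := (· * ·)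
  one := 1
  add_assoc a b c := by
    have hc := wF_cocycle p hfp.out a.fst b.fst c.fst
    ext <;> simp only [add_fst, add_snd]
    · ring
    · linear_combination -hc
  zero_add a := by
    ext <;> simp [wF_zero_left]
  add_zero a := by
    ext <;> simp [wF_zero_right]
  add_comm a b := by
    ext <;> simp only [add_fst, add_snd]
    · ring
    · rw [wF_comm p hfp.out]; ring
  neg_add_cancel a := by
    have := wF_comm p hfp.out a.fst (-a.fst)
    ext <;> simp only [add_fst, add_snd, neg_fst, neg_snd, zero_fst, zero_snd]
    · ring
    · linear_combination this
  mul_assoc a b c := by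
    ext <;> simp only [mul_fst, mul_snd] <;> ring
  one_mul a := by
    ext <;> simp
  mul_one a := by
    ext <;> simp
  mul_comm a b := by
    ext <;> simp only [mul_fst, mul_snd] <;> ring
  left_distrib a b c := by
    have h1 : wF p (a.fst * b.fst) (a.fst * c.fst) = a.fst ^ p * wF p b.fst c.fst :=
      wF_mul_left p _ _ _
    have h2 : (b.fst + c.fst) ^ p = b.fst ^ p + c.fst ^ p + (p : B) * wF p b.fst c.fst := by
      have := p_mul_wF p hfp.out b.fst c.fst
      linear_combination -this
    ext <;> simp only [mul_fst, mul_snd, add_fst, add_snd]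
    · ring
    · linear_combination h1 + h2 * a.snd
  right_distrib a b c := by
    have h1 : wF p (a.fst * c.fst) (b.fst * c.fst) = c.fst ^ p * wF p a.fst b.fst := by
      rw [mul_comm a.fst c.fst, mul_comm b.fst c.fst]; exact wF_mul_left p _ _ _
    have h2 : (a.fst + b.fst) ^ p = a.fst ^ p + b.fst ^ p + (p : B) * wF p a.fst b.fst := by
      have := p_mul_wF p hfp.out a.fst b.fst
      linear_combination -this
    ext <;> simp only [mul_fst, mul_snd, add_fst, add_snd]
    · ring
    · linear_combination h1 + h2 * c.snd
  zero_mul a := by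
    ext <;> simp [zero_pow hfp.out.ne_zero]
  mul_zero a := by
    ext <;> simp [zero_pow hfp.out.ne_zero]
  nsmul := nsmulRec
  zsmul := zsmulRec

/-- First projection `W₂(B) → B` as a ring hom. -/
def pr (p : ℕ) (B : Type u) [CommRing B] [Fact p.Prime] : W2 p B →+* B where
  toFun x := x.fst
  map_one' := rfl
  map_mul' _ _ := rfl
  map_zero' := rfl
  map_add' _ _ := rfl

/-- Functoriality of `W₂`. -/
def map {C : Type u} [CommRing C] (g : B →+* C) : W2 p B →+* W2 p C where
  toFun x := ⟨g x.fst, g x.snd⟩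
  map_one' := by ext <;> simp
  map_mul' a b := by ext <;> simp
  map_zero' := by ext <;> simp
  map_add' a b := by
    ext <;> simp [map_wF p g]

/-- The ideal of elements `(0, b)` with `p^n ∣ b`. -/
def K (p : ℕ) (B : Type u) [CommRing B] [hq : Fact p.Prime] (n : ℕ) : Ideal (W2 p B) where
  carrier := {x | x.fst = 0 ∧ (p : B) ^ n ∣ x.snd}
  add_mem' := by
    rintro a b ⟨ha, c, hc⟩ ⟨hb, d, hd⟩
    refine ⟨by simp [ha, hb], c + d, ?_⟩
    simp [ha, hb, hc, hd, wF_zero_left, mul_add]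
  zero_mem' := ⟨rfl, dvd_zero _⟩
  smul_mem' := by
    rintro r x ⟨hx, c, hc⟩
    rw [smul_eq_mul]
    refine ⟨by simp [hx], r.fst ^ p * c + (p : B) * r.snd * c, ?_⟩
    rw [mul_snd, hx, hc, zero_pow hq.out.ne_zero]
    ring

end W2

/-- A δ-structure gives a ring hom section `B → W₂(B)`. -/
def DeltaStruct.toW2 {p : ℕ} {B : Type u} [CommRing B] [Fact p.Prime] (d : DeltaStruct p B) :
    B →+* W2 p B where
  toFun x := ⟨x, d.δ x⟩
  map_one' := by ext <;> simp [d.delta_one]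
  map_mul' x y := by ext <;> simp [d.delta_mul]
  map_zero' := by
    have h0 : d.δ 0 = 0 := by
      have h := d.delta_add 0 0
      rw [show (∑ i ∈ Finset.Ioo 0 p, ((p.choose i / p : ℕ) : B) * (0 : B) ^ i * (0 : B) ^ (p - i))
        = wF p 0 0 from rfl, wF_zero_left] at h
      simpa using h
    ext <;> simp [h0]
  map_add' x y := by
    ext <;> simp [d.delta_add, wF]

/-- If `A → A'` is a formally étale ring map which is a map of δ-rings, `A' → B` is a ring map
into a δ-ring `B` in which `p` is nilpotent, and the composite `A → B` is a map of δ-rings,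
then `A' → B` is a map of δ-rings. -/
theorem stmt0 (p : ℕ) (hp : p.Prime) {A A' B : Type u} [CommRing A] [CommRing A'] [CommRing B]
    (dA : DeltaStruct p A) (dA' : DeltaStruct p A') (dB : DeltaStruct p B)
    (f : A →+* A') (g : A' →+* B)
    (hetale : @Algebra.FormallyEtale A A' _ _ f.toAlgebra)
    (hf : ∀ a : A, dA'.δ (f a) = f (dA.δ a))
    (hpnil : IsNilpotent (p : B))
    (hgf : ∀ a : A, dB.δ (g (f a)) = g (f (dA.δ a))) :
    ∀ a : A', dB.δ (g a) = g (dA'.δ a) := by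
  haveI : Fact p.Prime := ⟨hp⟩
  letI : Algebra A A' := f.toAlgebra
  haveI : Algebra.FormallyEtale A A' := hetale
  -- the two ring homs A' → W₂(B)
  set u : A' →+* W2 p B := dB.toW2.comp g with hu
  set v : A' →+* W2 p B := (W2.map g).comp dA'.toW2 with hv
  letI : Algebra A (W2 p B) := (u.comp f).toAlgebra
  have huv_f : ∀ a : A, u (f a) = v (f a) := by
    intro a
    ext
    · rfl
    · show dB.δ (g (f a)) = g (dA'.δ (f a))
      rw [hgf, hf]
  let uA : A' →ₐ[A] W2 p B :=
    { u with commutes' := fun a => rfl }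
  let vA : A' →ₐ[A] W2 p B :=
    { v with commutes' := fun a => (huv_f a).symm }
  -- the kernel of the projection is nilpotent
  obtain ⟨k, hk⟩ := hpnil
  have hKle : ∀ n : ℕ, (RingHom.ker (W2.pr p B)) ^ (n + 1) ≤ W2.K p B n := by
    intro n
    induction n with
    | zero =>
      intro x hx
      rw [pow_one] at hx
      exact ⟨hx, by simpa using dvd_refl x.snd⟩
    | succ n ih =>
      rw [pow_succ]
      rw [Ideal.mul_le]
      intro r hr s hs
      obtain ⟨hr1, c, hc⟩ := ih hr
      have hs1 : s.fst = 0 := hs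
      refine ⟨by simp [hr1, hs1], c * s.snd, ?_⟩
      simp only [W2.mul_snd, hr1, hs1, zero_pow hp.ne_zero, zero_mul, hc, add_zero, zero_add]
      ring
  have hnil : IsNilpotent (RingHom.ker (W2.pr p B)) := by
    refine ⟨k + 1, ?_⟩
    rw [Ideal.zero_eq_bot, eq_bot_iff]
    refine le_trans (hKle k) ?_
    rintro x ⟨hx1, c, hc⟩
    rw [hk, zero_mul] at hc
    have : x = 0 := by ext <;> simp [hx1, hc]
    exact (Submodule.mem_bot _).mpr this
  -- formally unramified ⇒ the two lifts agree
  have hpr : ∀ x : A', W2.pr p B (uA x) = W2.pr p B (vA x) := fun x => rfl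
  have := Algebra.FormallyUnramified.ext' (W2.pr p B) hnil uA vA hpr
  intro a
  have h := congrArg (fun w : A' →ₐ[A] W2 p B => (w a).snd) this
  exact h
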